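/- If f = a_1x_1 + ⋯ + a_dx_d is a linear form in ℂ[x_1,…,x_d], then for every n ≥ d+1 the polynomial f^{(n)}(x) := f(x_1^n,…,x_d^n) lies in the ideal generated by f^{(n-d)},…,f^{(n-1)}; consequently f^{(n)} ∈ (f, f^{(2)},…, f^{(d)}) for all n ≥ 1. -/
import Mathlib


open MvPolynomial

/-- The substitution `x_j ↦ x_j^i`. -/
noncomputable def pw (d i : ℕ) (f : MvPolynomial (Fin d) ℂ) : MvPolynomial (Fin d) ℂ :=
  aeval (fun j => X j ^ i) f

lemma keyvar (d : ℕ) (j : Fin d) :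
    ∑ i ∈ Finset.range (d+1), (-1:MvPolynomial (Fin d) ℂ)^i *
      (esymm (Fin d) ℂ i * X j ^ (d - i)) = 0 := by
  have h := Multiset.prod_X_sub_X_eq_sum_esymm
    (Finset.univ.val.map fun i : Fin d => (X i : MvPolynomial (Fin d) ℂ))
  have h2 := congrArg (Polynomial.eval (X j : MvPolynomial (Fin d) ℂ)) h
  rw [Multiset.map_map] at h2
  simp only [Multiset.card_map,
    Polynomial.eval_multiset_prod, Multiset.map_map, Function.comp,
    Polynomial.eval_sub, Polynomial.eval_X, Polynomial.eval_C,
    Polynomial.eval_finset_sum, Polynomial.eval_mul, Polynomial.eval_pow,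
    Polynomial.eval_neg, Polynomial.eval_one,
    ← esymm_eq_multiset_esymm] at h2
  have hc : Multiset.card (Finset.univ.val : Multiset (Fin d)) = d := by
    simp [Finset.card_univ]
  rw [hc] at h2
  rw [← h2]
  apply Multiset.prod_eq_zero
  simp only [Multiset.mem_map]
  exact ⟨j, by simp, by ring⟩

lemma pw_eq (d m : ℕ) (a : Fin d → ℂ) :
    pw d m (∑ j, C (a j) * X j) = ∑ j, C (a j) * X j ^ m := by
  simp [pw, algebraMap_eq]

lemma key2 (d n : ℕ) (hn : d ≤ n) (a : Fin d → ℂ) :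
    ∑ i ∈ Finset.range (d+1), (-1:MvPolynomial (Fin d) ℂ)^i * esymm (Fin d) ℂ i *
      (∑ j, C (a j) * X j ^ (n - i)) = 0 := by
  have : ∀ i ∈ Finset.range (d+1), ∀ j : Fin d,
      (X j : MvPolynomial (Fin d) ℂ) ^ (n - i) = X j ^ (n - d) * X j ^ (d - i) := by
    intro i hi j
    have hi' := Finset.mem_range.mp hi
    rw [← pow_add]
    congr 1
    omega
  calc ∑ i ∈ Finset.range (d+1), (-1:MvPolynomial (Fin d) ℂ)^i * esymm (Fin d) ℂ i *
        (∑ j, C (a j) * X j ^ (n - i))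
      = ∑ i ∈ Finset.range (d+1), ∑ j,
          (-1:MvPolynomial (Fin d) ℂ)^i * esymm (Fin d) ℂ i * (C (a j) * X j ^ (n - i)) := by
        simp_rw [Finset.mul_sum]
    _ = ∑ j, ∑ i ∈ Finset.range (d+1),
          (-1:MvPolynomial (Fin d) ℂ)^i * esymm (Fin d) ℂ i * (C (a j) * X j ^ (n - i)) :=
        Finset.sum_comm
    _ = ∑ j, C (a j) * X j ^ (n - d) *
        (∑ i ∈ Finset.range (d+1), (-1:MvPolynomial (Fin d) ℂ)^i *
          (esymm (Fin d) ℂ i * X j ^ (d - i))) := by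
        refine Finset.sum_congr rfl fun j _ => ?_
        rw [Finset.mul_sum]
        refine Finset.sum_congr rfl fun i hi => ?_
        rw [this i hi j]; ring
    _ = 0 := by simp [keyvar]

lemma key3 (d n : ℕ) (hn : d ≤ n) (a : Fin d → ℂ)
    (f : MvPolynomial (Fin d) ℂ) (hf : f = ∑ j, C (a j) * X j) :
    pw d n f = ∑ i ∈ Finset.Icc 1 d,
      (-((-1:MvPolynomial (Fin d) ℂ)^i * esymm (Fin d) ℂ i)) * pw d (n - i) f := by
  subst hf
  have h := key2 d n hn a
  have h0 : Finset.range (d+1) = insert 0 (Finset.Icc 1 d) := by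
    ext i; simp; omega
  rw [h0, Finset.sum_insert (by simp)] at h
  simp only [pow_zero, esymm_zero, one_mul, Nat.sub_zero] at h
  simp only [pw_eq, neg_mul, Finset.sum_neg_distrib]
  exact eq_neg_of_add_eq_zero_left h

theorem stmt1 (d : ℕ) (hd : 0 < d) (a : Fin d → ℂ)
    (f : MvPolynomial (Fin d) ℂ) (hf : f = ∑ j, C (a j) * X j) :
    (∀ n : ℕ, d + 1 ≤ n →
      pw d n f ∈ Ideal.span ((fun k => pw d k f) '' Set.Icc (n - d) (n - 1))) ∧
    (∀ n : ℕ, 1 ≤ n →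
      pw d n f ∈ Ideal.span ((fun k => pw d k f) '' Set.Icc 1 d)) := by
  have part1 : ∀ n : ℕ, d + 1 ≤ n →
      pw d n f ∈ Ideal.span ((fun k => pw d k f) '' Set.Icc (n - d) (n - 1)) := by
    intro n hn
    rw [key3 d n (by omega) a f hf]
    refine Ideal.sum_mem _ fun i hi => ?_
    have hi' := Finset.mem_Icc.mp hi
    refine Ideal.mul_mem_left _ _ (Ideal.subset_span ?_)
    exact ⟨n - i, ⟨by omega, by omega⟩, rfl⟩
  refine ⟨part1, ?_⟩
  intro n
  induction n using Nat.strong_induction_on with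
  | _ n ih =>
    intro hn
    by_cases hle : n ≤ d
    · exact Ideal.subset_span ⟨n, ⟨hn, hle⟩, rfl⟩
    · have h1 := part1 n (by omega)
      refine (Ideal.span_le.mpr ?_) h1
      rintro _ ⟨k, ⟨hk1, hk2⟩, rfl⟩
      exact ih k (by omega) (by omega)
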